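/- The map sending (c_2, ..., c_{n+1}) to the tuple of leading principal minors (m_1, ..., m_n) of the Toeplitz matrix M_0 (with c_1 = 1) is a polynomial bijection: m_r = (-1)^{r+1} c_{r+1} + p_r(c_2, ..., c_r) for some polynomial p_r, and hence the polynomial ring C[c_2, ..., c_{n+1}] equals C[m_1, ..., m_n]. -/

import Mathlib

open Matrix

/-- Toeplitz matrix `M0` over a commutative ring. -/
noncomputable def M0R (R : Type*) [CommRing R] (c : ℕ → R) (n : ℕ) :
    Matrix (Fin n) (Fin n) R :=
  fun i j => if (j : ℕ) ≤ (i : ℕ) + 1 then c ((i : ℕ) + 2 - (j : ℕ)) else 0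

/-- Leading principal minors of `M0R`, `pmR R c 0 = 1`. -/
noncomputable def pmR (R : Type*) [CommRing R] (c : ℕ → R) (r : ℕ) : R :=
  (M0R R c r).det

/-- The coefficients `c 2, ..., c (n+1)` as independent variables, with `c 1 = 1` and all
other indices sent to `0`. -/
noncomputable def cP (n : ℕ) : ℕ → MvPolynomial (Fin n) ℂ := fun k =>
  if h : 2 ≤ k ∧ k ≤ n + 1 then MvPolynomial.X ⟨k - 2, by omega⟩
  else if k = 1 then 1 else 0

lemma val_succAbove' {n : ℕ} (p : Fin (n+1)) (i : Fin n) :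
    ((p.succAbove i : Fin (n+1)) : ℕ) = if (i:ℕ) < (p:ℕ) then (i:ℕ) else (i:ℕ)+1 := by
  unfold Fin.succAbove
  rcases lt_or_ge (Fin.castSucc i) p with h | h
  · rw [if_pos h, if_pos (by simpa [Fin.lt_def] using h)]; rfl
  · rw [if_neg (not_lt.2 h), if_neg (by simpa [Fin.lt_def] using not_lt.2 h)]; rfl

/-- The submatrix of `M0R (r+1)` deleting the last row and column `j` has
determinant equal to the `j`-th leading principal minor. -/
lemma pm_sub (R : Type*) [CommRing R] (c : ℕ → R) (hc : c 1 = 1) :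
    ∀ (r : ℕ) (j : Fin (r+1)),
      ((M0R R c (r+1)).submatrix Fin.castSucc j.succAbove).det = pmR R c (j : ℕ) := by
  intro r
  induction r with
  | zero =>
      intro j
      have hj : (j : ℕ) = 0 := by omega
      rw [hj]
      simp [pmR, Matrix.det_fin_zero]
  | succ r ih =>
      intro j
      by_cases hj : (j : ℕ) = r + 1
      · -- the submatrix is exactly `M0R R c (r+1)`
        have hsub : (M0R R c (r+2)).submatrix Fin.castSucc j.succAbove
            = M0R R c (r+1) := by
          ext a b
          have hb : ((j.succAbove b : Fin (r+2)) : ℕ) = (b : ℕ) := by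
            rw [val_succAbove', if_pos (by omega)]
          simp only [Matrix.submatrix_apply, M0R, hb, Fin.coe_castSucc]
        rw [hsub, hj]; rfl
      · -- expand along the last column
        have hjr : (j : ℕ) ≤ r := by omega
        rw [Matrix.det_succ_column _ (Fin.last r)]
        have hcol : ∀ i : Fin (r+1),
            ((M0R R c (r+2)).submatrix Fin.castSucc j.succAbove) i (Fin.last r)
              = if (i : ℕ) = r then 1 else 0 := by
          intro i
          have hsa : ((j.succAbove (Fin.last r) : Fin (r+2)) : ℕ) = r + 1 := by
            rw [val_succAbove', if_neg (by simp [Fin.val_last]; omega)]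
            simp [Fin.val_last]
          simp only [Matrix.submatrix_apply, M0R, hsa, Fin.coe_castSucc]
          rcases eq_or_ne (i : ℕ) r with h | h
          · rw [if_pos h, if_pos (by omega)]
            have : (i : ℕ) + 2 - (r + 1) = 1 := by omega
            rw [this, hc]
          · rw [if_neg h, if_neg (by omega)]
        rw [Finset.sum_eq_single (Fin.last r)]
        · rw [hcol, if_pos (by simp [Fin.val_last]), mul_one]
          have hpow : ((-1 : R) ^ (((Fin.last r) : ℕ) + ((Fin.last r) : ℕ))) = 1 :=
            Even.neg_one_pow ⟨(Fin.last r : ℕ), rfl⟩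
          rw [hpow, one_mul]
          -- identify the smaller submatrix
          have hj' : (j : ℕ) < r + 1 := by omega
          have hsub :
              (((M0R R c (r+2)).submatrix Fin.castSucc j.succAbove).submatrix
                (Fin.last r).succAbove (Fin.last r).succAbove)
              = (M0R R c (r+1)).submatrix Fin.castSucc
                  (Fin.succAbove ⟨(j : ℕ), hj'⟩) := by
            ext a b
            simp only [Matrix.submatrix_apply, Fin.succAbove_last, M0R]
            have h3 : ((j.succAbove (Fin.castSucc b) : Fin (r+2)) : ℕ)
                = ((Fin.succAbove (⟨(j : ℕ), hj'⟩ : Fin (r+1)) b : Fin (r+1)) : ℕ) := by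
              rw [val_succAbove', val_succAbove']
              simp only [Fin.coe_castSucc]
            rw [h3]
            simp only [Fin.coe_castSucc]
          rw [hsub, ih ⟨(j : ℕ), hj'⟩]
        · intro i _ hi
          rw [hcol, if_neg (fun h => hi (by apply Fin.ext; simpa [Fin.val_last] using h))]
          ring
        · intro h
          exact absurd (Finset.mem_univ _) h

/-- Laplace expansion along the last row. -/
lemma pm_rec (R : Type*) [CommRing R] (c : ℕ → R) (hc : c 1 = 1) (r : ℕ) :
    pmR R c (r+1)
      = ∑ j : Fin (r+1), (-1 : R) ^ (r + (j : ℕ)) * c (r + 2 - (j : ℕ)) * pmR R c (j : ℕ) := by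
  rw [pmR, Matrix.det_succ_row _ (Fin.last r)]
  refine Finset.sum_congr rfl fun j _ => ?_
  rw [Fin.succAbove_last, pm_sub R c hc r j]
  have he : M0R R c (r+1) (Fin.last r) j = c (r + 2 - (j : ℕ)) := by
    simp only [M0R, Fin.val_last]
    rw [if_pos (by omega)]
  rw [he]
  simp only [Fin.val_last]

lemma cP_one (n : ℕ) : cP n 1 = 1 := by
  simp [cP]

lemma cP_mem (n : ℕ) {k : ℕ} (h2 : 2 ≤ k) (hk : k ≤ n + 1) {s : Set (Fin n)}
    (hs : (⟨k - 2, by omega⟩ : Fin n) ∈ s) :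
    cP n k ∈ MvPolynomial.supported ℂ s := by
  rw [cP, dif_pos ⟨h2, hk⟩]
  exact (MvPolynomial.X_mem_supported).2 hs

/-- The minors lie in the expected supported subalgebras. -/
lemma pm_supported (n : ℕ) : ∀ r : ℕ, r ≤ n →
    pmR (MvPolynomial (Fin n) ℂ) (cP n) r
      ∈ MvPolynomial.supported ℂ {i : Fin n | (i : ℕ) + 2 ≤ r + 1} := by
  intro r
  induction r using Nat.strong_induction_on with
  | _ r ih =>
    intro hr
    match r, ih, hr with
    | 0, ih, hr =>
        simp only [pmR, Matrix.det_fin_zero]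
        exact one_mem _
    | (r+1), ih, hr =>
        rw [pm_rec _ _ (cP_one n) r]
        apply sum_mem
        intro j _
        refine mul_mem (mul_mem ?_ ?_) ?_
        · exact pow_mem (neg_mem (one_mem _)) _
        · rcases eq_or_ne (j : ℕ) (r+1) with h | h
          · have : r + 2 - (j : ℕ) = 1 := by omega
            rw [this, cP_one]; exact one_mem _
          · have h2 : 2 ≤ r + 2 - (j : ℕ) := by omega
            have hk : r + 2 - (j : ℕ) ≤ n + 1 := by omega
            exact cP_mem n h2 hk (by simp only [Set.mem_setOf_eq]; omega)
        · exact MvPolynomial.supported_mono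
            (by intro i hi; simp only [Set.mem_setOf_eq] at hi ⊢; omega)
            (ih (j : ℕ) (by omega) (by omega))

/-- Key decomposition : `m r = (-1)^(r+1) * c (r+1) + p` with `p` supported on
`c 2, ..., c r`. -/
lemma pm_decomp (n : ℕ) (r : ℕ) (hr1 : 1 ≤ r) (hrn : r ≤ n) :
    ∃ p ∈ MvPolynomial.supported ℂ {i : Fin n | (i : ℕ) + 2 ≤ r},
      pmR (MvPolynomial (Fin n) ℂ) (cP n) r
        = (-1 : MvPolynomial (Fin n) ℂ) ^ (r + 1) * cP n (r + 1) + p := by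
  obtain ⟨r, rfl⟩ : ∃ s, r = s + 1 := ⟨r - 1, by omega⟩
  refine ⟨∑ j ∈ Finset.univ.erase (0 : Fin (r+1)),
      (-1 : MvPolynomial (Fin n) ℂ) ^ (r + (j : ℕ)) * cP n (r + 2 - (j : ℕ))
        * pmR (MvPolynomial (Fin n) ℂ) (cP n) (j : ℕ), ?_, ?_⟩
  · apply sum_mem
    intro j hj
    have hj0 : (j : ℕ) ≠ 0 := by
      intro h
      exact (Finset.mem_erase.1 hj).1 (Fin.ext h)
    have hj1 : 1 ≤ (j : ℕ) := by omega
    have hjr : (j : ℕ) ≤ r := by omega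
    refine mul_mem (mul_mem ?_ ?_) ?_
    · exact pow_mem (neg_mem (one_mem _)) _
    · have h2 : 2 ≤ r + 2 - (j : ℕ) := by omega
      have hk : r + 2 - (j : ℕ) ≤ n + 1 := by omega
      exact cP_mem n h2 hk (by simp only [Set.mem_setOf_eq]; omega)
    · exact MvPolynomial.supported_mono
        (by intro i hi; simp only [Set.mem_setOf_eq] at hi ⊢; omega)
        (pm_supported n (j : ℕ) (by omega))
  · rw [pm_rec _ _ (cP_one n) r]
    rw [← Finset.add_sum_erase _ _ (Finset.mem_univ (0 : Fin (r+1)))]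
    rw [add_left_inj]
    have h0 : pmR (MvPolynomial (Fin n) ℂ) (cP n) ((0 : Fin (r+1)) : ℕ) = 1 := by
      simp [pmR, Matrix.det_fin_zero]
      exact Matrix.det_isEmpty
    rw [h0, mul_one]
    simp only [Fin.val_zero, add_zero, Nat.sub_zero]
    rw [show r + 1 + 1 = r + 2 from rfl, pow_add, neg_one_sq, mul_one]

theorem stmt6 (n : ℕ) (hn : 1 ≤ n) :
    (∀ r, 1 ≤ r → r ≤ n →
      ∃ p ∈ MvPolynomial.supported ℂ {i : Fin n | (i : ℕ) + 2 ≤ r},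
        pmR (MvPolynomial (Fin n) ℂ) (cP n) r
          = (-1 : MvPolynomial (Fin n) ℂ) ^ (r + 1) * cP n (r + 1) + p) ∧
    Algebra.adjoin ℂ
        (Set.range fun r : Fin n => pmR (MvPolynomial (Fin n) ℂ) (cP n) ((r : ℕ) + 1))
      = ⊤ := by
  constructor
  · exact fun r => pm_decomp n r
  · set A := Algebra.adjoin ℂ
      (Set.range fun r : Fin n => pmR (MvPolynomial (Fin n) ℂ) (cP n) ((r : ℕ) + 1))
      with hA
    have key : ∀ k : ℕ, ∀ hk : k < n,
        (MvPolynomial.X (⟨k, hk⟩ : Fin n) : MvPolynomial (Fin n) ℂ) ∈ A := by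
      intro k
      induction k using Nat.strong_induction_on with
      | _ k ih =>
        intro hk
        obtain ⟨p, hp, hpe⟩ := pm_decomp n (k + 1) (by omega) (by omega)
        have hcp : cP n (k + 2) = MvPolynomial.X (⟨k, hk⟩ : Fin n) := by
          rw [cP, dif_pos ⟨by omega, by omega⟩]
          congr 1
        have hm : pmR (MvPolynomial (Fin n) ℂ) (cP n) (k + 1) ∈ A :=
          Algebra.subset_adjoin ⟨⟨k, hk⟩, rfl⟩
        have hpA : p ∈ A := by
          have hle : MvPolynomial.supported ℂ {j : Fin n | (j : ℕ) + 2 ≤ k + 1} ≤ A := by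
            rw [MvPolynomial.supported]
            apply Algebra.adjoin_le
            rintro _ ⟨j, hj, rfl⟩
            simp only [Set.mem_setOf_eq] at hj
            have := ih (j : ℕ) (by omega) j.isLt
            simpa using this
          exact hle hp
        have h1 : ((-1 : MvPolynomial (Fin n) ℂ)) ^ (k + 2)
            * ((-1 : MvPolynomial (Fin n) ℂ)) ^ (k + 2) = 1 := by
          rw [← pow_add]
          exact Even.neg_one_pow ⟨k + 2, by ring⟩
        have hX : (MvPolynomial.X (⟨k, hk⟩ : Fin n) : MvPolynomial (Fin n) ℂ)
            = (-1) ^ (k + 2)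
              * (pmR (MvPolynomial (Fin n) ℂ) (cP n) (k + 1) - p) := by
          rw [hpe, show k + 1 + 1 = k + 2 from rfl, hcp, add_sub_cancel_right,
            ← mul_assoc, h1, one_mul]
        rw [hX]
        exact mul_mem (pow_mem (neg_mem (one_mem _)) _) (sub_mem hm hpA)
    rw [eq_top_iff, ← MvPolynomial.adjoin_range_X]
    apply Algebra.adjoin_le
    rintro _ ⟨i, rfl⟩
    have := key (i : ℕ) i.isLt
    simpa using this
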